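/- Let K be an étale ℚ-algebra, (I_N) a Følner sequence in O_K, L ≥ 1 an integer, and 𝔟_1, …, 𝔟_L pairwise coprime invertible ideals of O_K. For each 1 ≤ i ≤ L let A_i ⊆ O_K be an arbitrary set and put R_i := A_i + 𝔟_i, and let C_L := {x ∈ O_K : x ∉ R_i for all 1 ≤ i ≤ L}. Then |C_L ∩ I_N|/|I_N| converges as N → ∞, and the density d_I(C_L) equals ∏_{i=1}^{L} (1 − |R_i|/N(𝔟_i)), where |R_i| is the cardinality of the image of R_i in O_K/𝔟_i. -/

import Mathlib

open Filter Topology MeasureTheory Pointwise symmDiff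

noncomputable section

namespace ErdosSieve

variable {O : Type} [CommRing O]

/-- A sieve over (the ring of integers of) an étale `ℚ`-algebra: a sequence of pairwise
coprime invertible (i.e. finite-quotient) ideals `b i` together with, for each `i`, a finite
set `gen i` of representatives, so that the sieved-out set is `R_i = gen i + b i`, which is
required to be a proper subset of the ring. -/
structure Sieve (O : Type) [CommRing O] : Type where
  b : ℕ → Ideal O
  gen : ℕ → Finset O
  coprime : ∀ i j, i ≠ j → b i ⊔ b j = ⊤
  finQuot : ∀ i, Finite (O ⧸ b i)
  ne_univ : ∀ i, (↑(gen i) : Set O) + (↑(b i) : Set O) ≠ Set.univ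

/-- The `i`-th sieved-out set `R_i = gen i + b i`. -/
def Sieve.RSet (S : Sieve O) (i : ℕ) : Set O := (↑(S.gen i) : Set O) + (↑(S.b i) : Set O)

/-- The set `F_R` of `R`-free numbers. -/
def Sieve.FR (S : Sieve O) : Set O := (⋃ i, S.RSet i)ᶜ

/-- The norm `N(b i)` of the `i`-th ideal. -/
def Sieve.normb (S : Sieve O) (i : ℕ) : ℕ := Nat.card (O ⧸ S.b i)

/-- The number `|R_i|` of residue classes modulo `b i` met by `R_i`. -/
def Sieve.cardR (S : Sieve O) (i : ℕ) : ℕ :=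
  Nat.card ((Ideal.Quotient.mk (S.b i)) '' (S.RSet i))

/-- A sieve is Erdős if `∑ |R_i| / N(b_i) < ∞`. -/
def Sieve.IsErdos (S : Sieve O) : Prop :=
  Summable fun i => (S.cardR i : ℝ) / (S.normb i : ℝ)

/-- A Følner sequence: finite nonempty subsets of `O` which are asymptotically
translation-invariant. -/
def IsFolner (I : ℕ → Set O) : Prop :=
  (∀ N, (I N).Finite) ∧ (∀ N, (I N).Nonempty) ∧
    ∀ x : O, Tendsto
      (fun N => (Nat.card ↥(((x + ·) '' I N) ∆ (I N)) : ℝ) / (Nat.card ↥(I N) : ℝ))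
      atTop (𝓝 0)

/-- Upper density along a (Følner) sequence. -/
def upperDensity (I : ℕ → Set O) (A : Set O) : ℝ :=
  limsup (fun N => (Nat.card ↥(A ∩ I N) : ℝ) / (Nat.card ↥(I N) : ℝ)) atTop

/-- `A` has density `d` along the sequence `I`. -/
def HasDensity (I : ℕ → Set O) (A : Set O) (d : ℝ) : Prop :=
  Tendsto (fun N => (Nat.card ↥(A ∩ I N) : ℝ) / (Nat.card ↥(I N) : ℝ)) atTop (𝓝 d)

/-- `⋃_{i ≥ L} R i`. -/
def unionGe (R : ℕ → Set O) (L : ℕ) : Set O := ⋃ i, ⋃ (_ : L ≤ i), R i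

/-- `⋃_{i < L} R i`. -/
def unionLt (R : ℕ → Set O) (L : ℕ) : Set O := ⋃ i, ⋃ (_ : i < L), R i

/-- The weak light tails property for a family of sieved-out sets:
`limsup`-density of `⋃_{i ≥ L} R_i ∖ ⋃_{j < L} R_j` tends to `0` as `L → ∞`. -/
def WeakLightTailsFam (I : ℕ → Set O) (R : ℕ → Set O) : Prop :=
  Tendsto (fun L => upperDensity I (unionGe R L \ unionLt R L)) atTop (𝓝 0)

/-- The strong light tails property for a family of sieved-out sets. -/
def StrongLightTailsFam (I : ℕ → Set O) (R : ℕ → Set O) : Prop :=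
  Tendsto (fun L => upperDensity I (unionGe R L)) atTop (𝓝 0)

/-- A sieve has weak light tails for `I` if it is Erdős and the tail differences have
vanishing upper density. -/
def Sieve.HasWeakLightTails (S : Sieve O) (I : ℕ → Set O) : Prop :=
  S.IsErdos ∧ WeakLightTailsFam I S.RSet

/-- A sieve has strong light tails for `I` if it is Erdős and the tails have vanishing
upper density. -/
def Sieve.HasStrongLightTails (S : Sieve O) (I : ℕ → Set O) : Prop :=
  S.IsErdos ∧ StrongLightTailsFam I S.RSet

/-- The infinite product `∏_i (1 - |R_i|/N(b_i))`, realized as the infimum of the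
(nonincreasing) sequence of partial products, i.e. as its limit. -/
def Sieve.prodDensity (S : Sieve O) : ℝ :=
  ⨅ L : ℕ, ∏ i ∈ Finset.range L, (1 - (S.cardR i : ℝ) / (S.normb i : ℝ))

/-- `A` is an `R`-admissible set: `-A + R_i ≠ O` for all `i`. -/
def Sieve.Admissible (S : Sieve O) (A : Set O) : Prop :=
  ∀ i, -A + S.RSet i ≠ Set.univ

/-- The number `|-A + R_i|` of residue classes modulo `b i` met by `-A + R_i`. -/
def Sieve.cardShift (S : Sieve O) (A : Set O) (i : ℕ) : ℕ :=
  Nat.card ((Ideal.Quotient.mk (S.b i)) '' (-A + S.RSet i))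

/-- The infinite product `∏_i (1 - |-A + R_i|/N(b_i))` (as the infimum of the
partial products). -/
def Sieve.prodDensityShift (S : Sieve O) (A : Set O) : ℝ :=
  ⨅ L : ℕ, ∏ i ∈ Finset.range L, (1 - (S.cardShift A i : ℝ) / (S.normb i : ℝ))

/-- A subset `Y` of `O` is syndetic if finitely many translates of it cover `O`. -/
def Syndetic (Y : Set O) : Prop := ∃ C : Finset O, Y + (↑C : Set O) = Set.univ

-- Indicator of a subset of `O`, i.e. a point of the shift space `{0,1}^O`.
open Classical in
def chiSet (A : Set O) : O → Bool := fun x => if x ∈ A then true else false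

/-- The shift action `S_a(A) = A - a` on `{0,1}^O`: `χ_{A - a}(x) = χ_A (x + a)`. -/
def shiftB (a : O) (f : O → Bool) : O → Bool := fun x => f (x + a)

/-- The odometer group `G_R = ∏ i, O ⧸ b i`. -/
abbrev Sieve.GR (S : Sieve O) : Type := ∀ i : ℕ, O ⧸ S.b i

-- The map `φ_R : G_R → {0,1}^O`: `a ∈ φ_R(g)` iff `a + g i` avoids (the image of) `R_i`
-- modulo `b i` for every `i`.
open Classical in
def Sieve.phiB (S : Sieve O) (g : S.GR) : O → Bool := fun a =>
  if (∀ i, (Ideal.Quotient.mk (S.b i) a + g i) ∉ (Ideal.Quotient.mk (S.b i)) '' (S.RSet i))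
  then true else false

/-- The Mirsky measure `ν_R` on `{0,1}^O`: the pushforward under `φ_R` of the Haar
probability measure of the compact group `G_R` (each factor being finite and discrete,
and the Haar measure being normalized so that the whole group has measure `1`). -/
def Sieve.mirsky (S : Sieve O) : Measure (O → Bool) := by
  letI : ∀ i, TopologicalSpace (O ⧸ S.b i) := fun _ => ⊥
  haveI : ∀ i, DiscreteTopology (O ⧸ S.b i) := fun _ => ⟨rfl⟩
  haveI : ∀ i, Finite (O ⧸ S.b i) := S.finQuot
  haveI : ∀ i, IsTopologicalAddGroup (O ⧸ S.b i) := fun i => { }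
  letI : MeasurableSpace S.GR := borel _
  haveI : BorelSpace S.GR := ⟨rfl⟩
  exact Measure.map S.phiB (Measure.addHaarMeasure (G := S.GR) ⊤)

/-- The ring of integers of the étale `ℚ`-algebra `K 0 × ⋯ × K (m-1)`. -/
abbrev OK {m : ℕ} (K : Fin m → Type) [∀ j, Field (K j)] [∀ j, NumberField (K j)] : Type :=
  ∀ j, NumberField.RingOfIntegers (K j)

variable {m : ℕ} (K : Fin m → Type) [∀ j, Field (K j)] [∀ j, NumberField (K j)]

/-- The "ball" `B_N` in `O_K`: elements all of whose archimedean embeddings have absolute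
value at most `N` (the max over embeddings of all the number-field components). -/
def ball (N : ℕ) : Set (OK K) :=
  {x | ∀ j, ∀ φ : K j →+* ℂ,
    ‖φ (algebraMap (NumberField.RingOfIntegers (K j)) (K j) (x j))‖ ≤ N}


set_option linter.unusedSectionVars false

lemma aux_ncard_inter_eq_filter {A B : Set O} (hB : B.Finite) [DecidablePred (· ∈ A)] :
    (A ∩ B).ncard = (hB.toFinset.filter (· ∈ A)).card := by
  classical
  rw [← Set.ncard_coe_finset]
  congr 1
  ext x
  simp [and_comm]

lemma aux_symmDiff_finite {B B' : Set O} (hB : B.Finite) (hB' : B'.Finite) :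
    (B ∆ B').Finite := by
  rw [Set.symmDiff_def]
  exact (hB.diff).union (hB'.diff)

lemma aux_ncard_inter_le {A B B' : Set O} (hB : B.Finite) (hB' : B'.Finite) :
    (A ∩ B).ncard ≤ (A ∩ B').ncard + (B ∆ B').ncard := by
  have hsub : A ∩ B ⊆ (A ∩ B') ∪ (B ∆ B') := by
    intro x hx
    by_cases hx' : x ∈ B'
    · exact Or.inl ⟨hx.1, hx'⟩
    · exact Or.inr (Set.mem_symmDiff.2 (Or.inl ⟨hx.2, hx'⟩))
  calc (A ∩ B).ncard ≤ ((A ∩ B') ∪ (B ∆ B')).ncard :=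
        Set.ncard_le_ncard hsub (((hB'.inter_of_right _).union (aux_symmDiff_finite hB hB')))
    _ ≤ (A ∩ B').ncard + (B ∆ B').ncard := Set.ncard_union_le _ _

lemma aux_translate {Q : Type} [AddCommGroup Q] (π : O →+ Q) (x : O) (y : Q) (B : Set O) :
    (⇑π ⁻¹' {y + π x} ∩ ((x + ·) '' B)) = (x + ·) '' (⇑π ⁻¹' {y} ∩ B) := by
  ext z
  simp only [Set.mem_inter_iff, Set.mem_preimage, Set.mem_singleton_iff, Set.mem_image]
  constructor
  · rintro ⟨hz, w, hw, rfl⟩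
    refine ⟨w, ⟨?_, hw⟩, rfl⟩
    have h1 : π x + π w = π x + y := by rw [← map_add, hz, add_comm]
    exact add_left_cancel h1
  · rintro ⟨w, ⟨hwy, hw⟩, rfl⟩
    exact ⟨by rw [map_add, hwy, add_comm], w, hw, rfl⟩

lemma aux_sum_fibers {Q : Type} [AddCommGroup Q] [Fintype Q] [DecidableEq Q]
    (π : O →+ Q) {B : Set O} (hB : B.Finite) :
    ∑ z : Q, (⇑π ⁻¹' {z} ∩ B).ncard = B.ncard := by
  classical
  have h1 : ∀ z : Q, (⇑π ⁻¹' {z} ∩ B).ncard = (hB.toFinset.filter (fun a => π a = z)).card := by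
    intro z
    rw [aux_ncard_inter_eq_filter hB]
    congr 1
    ext a
    simp
  simp_rw [h1]
  rw [← Finset.card_eq_sum_card_fiberwise (fun x _ => Finset.mem_univ (π x))]
  exact (Set.ncard_eq_toFinset_card B hB).symm

lemma density_fiber {Q : Type} [AddCommGroup Q] [Fintype Q]
    (I : ℕ → Set O) (hI : IsFolner I) (π : O →+ Q) (hs : Function.Surjective π) (y : Q) :
    Tendsto (fun N => ((⇑π ⁻¹' {y} ∩ I N).ncard : ℝ) / ((I N).ncard : ℝ)) atTop
      (𝓝 (1 / (Fintype.card Q : ℝ))) := by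
  classical
  obtain ⟨hfin, hne, hfol⟩ := hI
  set c : ℕ → Q → ℝ := fun N z => ((⇑π ⁻¹' {z} ∩ I N).ncard : ℝ) / ((I N).ncard : ℝ) with hc
  have hden : ∀ N, (0:ℝ) < ((I N).ncard : ℝ) := by
    intro N
    exact_mod_cast (Set.ncard_pos (hfin N)).2 (hne N)
  -- difference of translated fibers tends to 0
  have hdiff : ∀ z z' : Q, Tendsto (fun N => c N z - c N z') atTop (𝓝 0) := by
    intro z z'
    obtain ⟨x, hx⟩ := hs (z - z')
    have hz : z = z' + π x := by rw [hx]; abel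
    subst hz
    refine squeeze_zero_norm (fun N => ?_) (hfol x)
    simp only [Nat.card_coe_set_eq]
    set n1 := (⇑π ⁻¹' {z' + π x} ∩ I N).ncard
    set n2 := (⇑π ⁻¹' {z'} ∩ I N).ncard
    set D := (((x + ·) '' I N) ∆ (I N)).ncard with hD
    have himg : (I N).Finite → True := fun _ => trivial
    have hfinimg : ((x + ·) '' I N).Finite := (hfin N).image _
    have hkey : (⇑π ⁻¹' {z' + π x} ∩ ((x + ·) '' I N)).ncard = n2 := by
      rw [aux_translate]
      exact Set.ncard_image_of_injective _ (add_right_injective x)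
    have h1 : n1 ≤ n2 + D := by
      have := aux_ncard_inter_le (A := ⇑π ⁻¹' {z' + π x}) (hfin N) hfinimg
      rw [hkey] at this
      rwa [symmDiff_comm] at this
    have h2 : n2 ≤ n1 + D := by
      have := aux_ncard_inter_le (A := ⇑π ⁻¹' {z' + π x}) hfinimg (hfin N)
      rwa [hkey] at this
    have habs : |(n1 : ℝ) - (n2 : ℝ)| ≤ (D : ℝ) := by
      rw [abs_sub_le_iff]
      constructor
      · have : (n1:ℝ) ≤ n2 + D := by exact_mod_cast h1
        linarith
      · have : (n2:ℝ) ≤ n1 + D := by exact_mod_cast h2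
        linarith
    have : ‖c N (z' + π x) - c N z'‖ = |(n1 : ℝ) - (n2 : ℝ)| / ((I N).ncard : ℝ) := by
      rw [hc]
      simp only
      rw [div_sub_div_same, Real.norm_eq_abs, abs_div, abs_of_pos (hden N)]
    rw [this]
    gcongr
  -- the sum over all fibers is 1
  have hsum : ∀ N, ∑ z : Q, c N z = 1 := by
    intro N
    rw [hc]
    simp only
    rw [← Finset.sum_div]
    rw [div_eq_one_iff_eq (ne_of_gt (hden N))]
    exact_mod_cast congrArg (Nat.cast : ℕ → ℝ) (aux_sum_fibers π (hfin N))
  have hq : (0:ℝ) < (Fintype.card Q : ℝ) := by exact_mod_cast Fintype.card_pos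
  have hkey : ∀ N, c N y - 1 / (Fintype.card Q : ℝ) =
      (1 / (Fintype.card Q : ℝ)) * ∑ z : Q, (c N y - c N z) := by
    intro N
    rw [Finset.sum_sub_distrib, hsum N, Finset.sum_const, Finset.card_univ, nsmul_eq_mul]
    field_simp
  have hlim : Tendsto (fun N => c N y - 1 / (Fintype.card Q : ℝ)) atTop (𝓝 0) := by
    simp_rw [hkey]
    have : Tendsto (fun N => ∑ z : Q, (c N y - c N z)) atTop (𝓝 0) := by
      have := tendsto_finset_sum (Finset.univ : Finset Q) (fun z _ => hdiff y z)
      simpa using this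
    simpa using this.const_mul (1 / (Fintype.card Q : ℝ))
  have := hlim.add_const (1 / (Fintype.card Q : ℝ))
  simpa using this


lemma density_preimage {Q : Type} [AddCommGroup Q] [Fintype Q]
    (I : ℕ → Set O) (hI : IsFolner I) (π : O →+ Q) (hs : Function.Surjective π) (S : Set Q) :
    HasDensity I (⇑π ⁻¹' S) ((S.ncard : ℝ) / (Fintype.card Q : ℝ)) := by
  classical
  have hcount : ∀ N, (⇑π ⁻¹' S ∩ I N).ncard
      = ∑ z ∈ S.toFinset, (⇑π ⁻¹' {z} ∩ I N).ncard := by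
    intro N
    have hB := hI.1 N
    rw [aux_ncard_inter_eq_filter hB]
    have hmem : ∀ x ∈ hB.toFinset.filter (· ∈ ⇑π ⁻¹' S), π x ∈ S.toFinset := by
      intro x hx
      simp only [Finset.mem_filter, Set.mem_preimage] at hx
      exact Set.mem_toFinset.2 hx.2
    rw [Finset.card_eq_sum_card_fiberwise hmem]
    refine Finset.sum_congr rfl (fun z hz => ?_)
    rw [aux_ncard_inter_eq_filter hB]
    refine congrArg Finset.card (Finset.ext fun a => ?_).symm
    rw [Finset.mem_filter, Finset.mem_filter, Finset.mem_filter]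
    simp only [Set.mem_preimage, Set.mem_singleton_iff]
    constructor
    · rintro ⟨h1, h3⟩; exact ⟨⟨h1, by rw [h3]; exact Set.mem_toFinset.1 hz⟩, h3⟩
    · rintro ⟨⟨h1, _⟩, h3⟩; exact ⟨h1, h3⟩
  unfold HasDensity
  simp only [Nat.card_coe_set_eq]
  have heq : (fun N => ((⇑π ⁻¹' S ∩ I N).ncard : ℝ) / ((I N).ncard : ℝ))
      = fun N => ∑ z ∈ S.toFinset, ((⇑π ⁻¹' {z} ∩ I N).ncard : ℝ) / ((I N).ncard : ℝ) := by
    funext N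
    rw [hcount N, Nat.cast_sum, Finset.sum_div]
  rw [heq]
  have hval : (S.ncard : ℝ) / (Fintype.card Q : ℝ)
      = ∑ _z ∈ S.toFinset, 1 / (Fintype.card Q : ℝ) := by
    rw [Finset.sum_const, nsmul_eq_mul, Set.ncard_eq_toFinset_card', mul_one_div]
  rw [hval]
  exact tendsto_finset_sum S.toFinset (fun z _ => density_fiber I hI π hs z)

lemma final_card {L : ℕ} {Q : Fin L → Type} [∀ i, Fintype (Q i)] [∀ i, Nonempty (Q i)]
    (T : ∀ i, Set (Q i)) :
    (((Set.univ.pi fun i => (T i)ᶜ).ncard : ℝ)) / (Fintype.card (∀ i, Q i) : ℝ)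
      = ∏ i, (1 - (Nat.card ↥(T i) : ℝ) / (Nat.card (Q i) : ℝ)) := by
  classical
  have h1 : (Set.univ.pi fun i => (T i)ᶜ).ncard = ∏ i, Nat.card ↥(T i)ᶜ := by
    rw [← Nat.card_coe_set_eq, Nat.card_congr (Equiv.Set.univPi _), Nat.card_pi]
  have h2 : Fintype.card (∀ i, Q i) = ∏ i, Nat.card (Q i) := by
    rw [← Nat.card_eq_fintype_card, Nat.card_pi]
  rw [h1, h2, Nat.cast_prod, Nat.cast_prod, ← Finset.prod_div_distrib]
  refine Finset.prod_congr rfl (fun i _ => ?_)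
  have hN : (0:ℝ) < (Nat.card (Q i) : ℝ) := by exact_mod_cast Nat.card_pos
  have hc : (T i).ncard + (T i)ᶜ.ncard = Nat.card (Q i) := Set.ncard_add_ncard_compl (T i)
  have hcast : (Nat.card ↥(T i)ᶜ : ℝ) = (Nat.card (Q i) : ℝ) - (Nat.card ↥(T i) : ℝ) := by
    rw [Nat.card_coe_set_eq, Nat.card_coe_set_eq, ← hc]; push_cast; ring
  rw [hcast, sub_div, div_self (ne_of_gt hN)]


/-- **Equidistribution along Følner sequences.** For finitely many pairwise coprime
invertible ideals `b 1, …, b L` and arbitrary sets `A_i`, setting `R_i = A_i + b_i`, the set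
of points avoiding all `R_i` has density `∏ (1 - |R_i|/N(b_i))` along any Følner sequence. -/
theorem equidistribution_folner
    {m : ℕ} (hm : 0 < m) (K : Fin m → Type) [∀ j, Field (K j)]
    [∀ j, NumberField (K j)]
    (I : ℕ → Set (OK K)) (hI : IsFolner I) (L : ℕ) (hL : 1 ≤ L)
    (b : Fin L → Ideal (OK K)) (hfin : ∀ i, Finite ((OK K) ⧸ b i))
    (hcop : ∀ i j, i ≠ j → b i ⊔ b j = ⊤)
    (A : Fin L → Set (OK K)) :
    HasDensity I {x : OK K | ∀ i, x ∉ A i + (↑(b i) : Set (OK K))}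
      (∏ i, (1 - (Nat.card ↥((Ideal.Quotient.mk (b i)) '' (A i + (↑(b i) : Set (OK K)))) : ℝ)
          / (Nat.card ((OK K) ⧸ b i) : ℝ))) := by
  classical
  haveI : ∀ i, Fintype ((OK K) ⧸ b i) := fun i => @Fintype.ofFinite _ (hfin i)
  haveI : ∀ i, Nonempty ((OK K) ⧸ b i) := fun i => ⟨0⟩
  have hpair : Pairwise (Function.onFun IsCoprime b) := fun {i j} h =>
    Ideal.isCoprime_iff_sup_eq.mpr (hcop i j h)
  set π₀ : OK K →+* (∀ i : Fin L, (OK K) ⧸ b i) :=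
    Pi.ringHom (fun i => Ideal.Quotient.mk (b i)) with hπ₀
  have hs0 : Function.Surjective ⇑π₀ := by
    intro y
    obtain ⟨x, hx⟩ := Ideal.quotientInfToPiQuotient_surj hpair y
    obtain ⟨x', rfl⟩ := Ideal.Quotient.mk_surjective x
    refine ⟨x', funext fun i => ?_⟩
    rw [← hx]
    exact (Ideal.quotientInfToPiQuotient_mk' b x' i).symm
  set π : OK K →+ (∀ i : Fin L, (OK K) ⧸ b i) := AddMonoidHom.mk' ⇑π₀ (map_add π₀) with hπ
  set T : ∀ i : Fin L, Set ((OK K) ⧸ b i) :=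
    fun i => ⇑(Ideal.Quotient.mk (b i)) '' (A i + (↑(b i) : Set (OK K))) with hT
  have hmem : ∀ (i : Fin L) (x : OK K),
      Ideal.Quotient.mk (b i) x ∈ T i ↔ x ∈ A i + (↑(b i) : Set (OK K)) := by
    intro i x
    constructor
    · rintro ⟨r, hr, hrx⟩
      rw [Set.mem_add] at hr
      obtain ⟨a, ha, β, hβ, rfl⟩ := hr
      have hd : a + β - x ∈ b i := (Ideal.Quotient.eq).1 hrx
      rw [Set.mem_add]
      refine ⟨a, ha, β - (a + β - x), ?_, by ring⟩
      exact Submodule.sub_mem _ hβ hd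
    · exact fun h => ⟨x, h, rfl⟩
  have hset : {x : OK K | ∀ i, x ∉ A i + (↑(b i) : Set (OK K))}
      = ⇑π ⁻¹' (Set.univ.pi fun i => (T i)ᶜ) := by
    ext x
    simp only [Set.mem_setOf_eq, Set.mem_preimage, Set.mem_pi, Set.mem_univ,
      forall_true_left, Set.mem_compl_iff]
    exact forall_congr' fun i => not_congr (hmem i x).symm
  have hd := density_preimage I hI π hs0 (Set.univ.pi fun i => (T i)ᶜ)
  rw [hset]
  have hval := final_card (Q := fun i : Fin L => (OK K) ⧸ b i) T
  rw [show (∏ i, (1 - (Nat.card ↥((Ideal.Quotient.mk (b i)) ''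
        (A i + (↑(b i) : Set (OK K)))) : ℝ) / (Nat.card ((OK K) ⧸ b i) : ℝ)))
      = (((Set.univ.pi fun i => (T i)ᶜ).ncard : ℝ))
        / (Fintype.card (∀ i : Fin L, (OK K) ⧸ b i) : ℝ) from hval.symm]
  exact hd


end ErdosSieve
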